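/- Let d ≥ 2 and suppose w_1, …, w_N ∈ ℝ^d are non-zero and pairwise non-collinear. If a linear combination Σ_{i=1}^N λ_i |w_i^⊤ x| is a linear function of x on ℝ^d (i.e., equals a^⊤x for some a ∈ ℝ^d for all x), then λ_i = 0 for all i. -/

import Mathlib

open MeasureTheory Filter Topology

/-- The dot-product linear functional. -/
private def dotL (d : ℕ) (v : Fin d → ℝ) : (Fin d → ℝ) →ₗ[ℝ] ℝ where
  toFun x := ∑ k, v k * x k
  map_add' x y := by simp [mul_add, Finset.sum_add_distrib]
  map_smul' c x := by simp [Finset.mul_sum, mul_left_comm]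

private lemma dot_self_pos {d : ℕ} {v : Fin d → ℝ} (hv : v ≠ 0) :
    0 < ∑ k, v k * v k := by
  obtain ⟨k, hk⟩ := Function.ne_iff.mp hv
  refine Finset.sum_pos' (fun k _ => mul_self_nonneg _) ⟨k, Finset.mem_univ _, ?_⟩
  have : v k ≠ 0 := by simpa using hk
  exact mul_self_pos.mpr this

/-- One can avoid finitely many hyperplanes in ℝ^d. -/
private lemma avoid_hyperplanes (d N : ℕ) (S : Finset (Fin N)) (v : Fin N → (Fin d → ℝ))
    (hv : ∀ j ∈ S, v j ≠ 0) :
    ∃ x : Fin d → ℝ, ∀ j ∈ S, (∑ k, v j k * x k) ≠ 0 := by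
  by_contra hcon
  push_neg at hcon
  have hker : ∀ j ∈ S, (LinearMap.ker (dotL d (v j)) : Submodule ℝ (Fin d → ℝ)) ≠ ⊤ := by
    intro j hj htop
    have h1 : dotL d (v j) (v j) = 0 := by
      have : v j ∈ LinearMap.ker (dotL d (v j)) := htop ▸ Submodule.mem_top
      simpa using this
    have h2 : 0 < ∑ k, v j k * v j k := dot_self_pos (hv j hj)
    rw [show dotL d (v j) (v j) = ∑ k, v j k * v j k from rfl] at h1
    linarith
  have hcover : (Set.univ : Set (Fin d → ℝ)) ⊆
      ⋃ j ∈ S, (LinearMap.ker (dotL d (v j)) : Set (Fin d → ℝ)) := by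
    intro x _
    obtain ⟨j, hj, hx⟩ := hcon x
    exact Set.mem_biUnion hj (by simpa [dotL, LinearMap.mem_ker] using hx)
  have hm : volume (⋃ j ∈ S, (LinearMap.ker (dotL d (v j)) : Set (Fin d → ℝ))) = 0 := by
    refine (measure_biUnion_null_iff S.countable_toSet).mpr ?_
    intro j hj
    exact Measure.addHaar_submodule volume _ (hker j hj)
  have huniv : volume (Set.univ : Set (Fin d → ℝ)) = 0 :=
    le_antisymm (hm ▸ measure_mono hcover) (zero_le)
  have hpos := (isOpen_univ : IsOpen (Set.univ : Set (Fin d → ℝ))).measure_pos volume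
    Set.univ_nonempty
  simp [huniv] at hpos

private lemma abs_add_abs_sub {c u : ℝ} (h : |u| ≤ |c|) : |c + u| + |c - u| = 2 * |c| := by
  rcases abs_le.mp h with ⟨h1, h2⟩
  rcases le_total 0 c with hc | hc
  · have hcc : |c| = c := abs_of_nonneg hc
    rw [hcc] at h1 h2
    rw [abs_of_nonneg (by linarith), abs_of_nonneg (by linarith), hcc]; ring
  · have hcc : |c| = -c := abs_of_nonpos hc
    rw [hcc] at h1 h2
    rw [abs_of_nonpos (by linarith), abs_of_nonpos (by linarith), hcc]; ring

private lemma dot_add_smul {d : ℕ} (u x v : Fin d → ℝ) (s : ℝ) :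
    ∑ k, u k * (x k + s * v k) = (∑ k, u k * x k) + s * ∑ k, u k * v k := by
  rw [Finset.mul_sum, ← Finset.sum_add_distrib]
  exact Finset.sum_congr rfl fun k _ => by ring

private lemma dot_sub_smul {d : ℕ} (u x v : Fin d → ℝ) (s : ℝ) :
    ∑ k, u k * (x k - s * v k) = (∑ k, u k * x k) - s * ∑ k, u k * v k := by
  rw [Finset.mul_sum, ← Finset.sum_sub_distrib]
  exact Finset.sum_congr rfl fun k _ => by ring

private lemma cancel_lemma {N : ℕ} (lam c b : Fin N → ℝ) (i₀ : Fin N)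
    (hc0 : c i₀ = 0) (hb : 0 < b i₀)
    (hS : ∑ j, lam j * |c j| = 0)
    (t : ℝ) (ht : 0 < t)
    (hbd : ∀ j, j ≠ i₀ → |t * b j| ≤ |c j|)
    (h1 : ∑ j, lam j * |c j + t * b j| = 0)
    (h2 : ∑ j, lam j * |c j - t * b j| = 0) : lam i₀ = 0 := by
  have hsum : ∑ j, lam j * (|c j + t * b j| + |c j - t * b j|) = 0 := by
    simp only [mul_add, Finset.sum_add_distrib]
    linarith
  rw [← Finset.add_sum_erase _ _ (Finset.mem_univ i₀)] at hsum
  have herase : ∑ j ∈ Finset.univ.erase i₀, lam j * (|c j + t * b j| + |c j - t * b j|)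
      = 2 * ∑ j ∈ Finset.univ.erase i₀, lam j * |c j| := by
    rw [Finset.mul_sum]
    refine Finset.sum_congr rfl fun j hj => ?_
    rw [abs_add_abs_sub (hbd j (Finset.ne_of_mem_erase hj))]; ring
  have h3 := Finset.add_sum_erase Finset.univ (fun j => lam j * |c j|) (Finset.mem_univ i₀)
  simp only [hS, hc0, abs_zero, mul_zero, zero_add] at h3
  have hterm : |c i₀ + t * b i₀| + |c i₀ - t * b i₀| = 2 * (t * b i₀) := by
    rw [hc0, zero_add, zero_sub, abs_neg, abs_of_pos (mul_pos ht hb)]; ring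
  rw [herase, h3, hterm] at hsum
  have hP : (0:ℝ) < t * b i₀ := mul_pos ht hb
  have hz : lam i₀ * (2 * (t * b i₀)) = 0 := by linarith
  rcases mul_eq_zero.mp hz with h | h
  · exact h
  · nlinarith

theorem abs_ridge_independence
    (d N : ℕ) (hd : 2 ≤ d)
    (w : Fin N → (Fin d → ℝ)) (hw : ∀ i, w i ≠ 0)
    (hnc : ∀ i j, i ≠ j → ∀ t : ℝ, w i ≠ t • w j)
    (lam : Fin N → ℝ) (a : Fin d → ℝ)
    (h : ∀ x : Fin d → ℝ,
      ∑ i, lam i * |∑ j, w i j * x j| = ∑ j, a j * x j) :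
    ∀ i, lam i = 0 := by
  -- Step 1: the sum is identically zero (evenness).
  have S0 : ∀ x : Fin d → ℝ, ∑ i, lam i * |∑ j, w i j * x j| = 0 := by
    intro x
    have h1 := h x
    have h2 := h (fun k => -x k)
    simp only [mul_neg, Finset.sum_neg_distrib, abs_neg] at h2
    linarith
  intro i₀
  set nrm : ℝ := ∑ k, w i₀ k * w i₀ k with hnrm
  have hnrm_pos : 0 < nrm := dot_self_pos (hw i₀)
  -- Step 2: find x₀ with w i₀ ⬝ x₀ = 0 but w j ⬝ x₀ ≠ 0 for j ≠ i₀.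
  obtain ⟨y, hy⟩ := avoid_hyperplanes d N (Finset.univ.erase i₀)
      (fun j => fun k => w j k - ((∑ l, w j l * w i₀ l) / nrm) * w i₀ k) (by
    intro j hj hz
    refine hnc j i₀ (Finset.ne_of_mem_erase hj) ((∑ l, w j l * w i₀ l) / nrm) ?_
    funext k
    have := congrFun hz k
    simp only [Pi.zero_apply] at this
    simpa [Pi.smul_apply, smul_eq_mul] using sub_eq_zero.mp this)
  set r : ℝ := (∑ l, w i₀ l * y l) / nrm with hr
  set x₀ : Fin d → ℝ := fun k => y k - r * w i₀ k with hx₀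
  set c : Fin N → ℝ := fun j => ∑ k, w j k * x₀ k with hc
  set b : Fin N → ℝ := fun j => ∑ k, w j k * w i₀ k with hb
  have hci : c i₀ = 0 := by
    show ∑ k, w i₀ k * (y k - r * w i₀ k) = 0
    rw [dot_sub_smul, hr]
    field_simp
    simp [hnrm, sq]
  have hbi : 0 < b i₀ := hnrm_pos
  have hcj : ∀ j, j ≠ i₀ → c j ≠ 0 := by
    intro j hj
    have hyj := hy j (Finset.mem_erase.mpr ⟨hj, Finset.mem_univ _⟩)
    have hexp : ∑ k, (w j k - ((∑ l, w j l * w i₀ l) / nrm) * w i₀ k) * y k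
        = (∑ k, w j k * y k) - ((∑ l, w j l * w i₀ l) / nrm) * ∑ k, w i₀ k * y k := by
      rw [Finset.mul_sum, ← Finset.sum_sub_distrib]
      exact Finset.sum_congr rfl fun k _ => by ring
    have hceq : c j = (∑ k, w j k * y k) - ((∑ l, w j l * w i₀ l) / nrm) * ∑ k, w i₀ k * y k := by
      show ∑ k, w j k * (y k - r * w i₀ k) = _
      rw [dot_sub_smul, hr]
      ring
    rw [hceq, ← hexp]
    exact hyj
  -- Step 3: pick a small positive t.
  have hev : ∀ᶠ t in nhdsWithin (0:ℝ) (Set.Ioi 0),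
      (0 < t ∧ ∀ j ∈ Finset.univ.erase i₀, |t * b j| ≤ |c j|) := by
    refine Filter.Eventually.and ?_ ?_
    · exact eventually_mem_nhdsWithin.mono fun t ht => ht
    · rw [eventually_all_finset]
      intro j hj
      have hcpos : 0 < |c j| := abs_pos.mpr (hcj j (Finset.ne_of_mem_erase hj))
      have htend : Filter.Tendsto (fun t : ℝ => |t * b j|) (nhdsWithin (0:ℝ) (Set.Ioi 0)) (𝓝 0) := by
        have hcont : Continuous (fun t : ℝ => |t * b j|) := (continuous_id.mul continuous_const).abs
        have h0 : Filter.Tendsto (fun t : ℝ => |t * b j|) (𝓝 (0:ℝ)) (𝓝 0) := by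
          simpa using hcont.tendsto 0
        exact h0.mono_left nhdsWithin_le_nhds
      exact (htend.eventually_lt_const hcpos).mono fun t ht => ht.le
  obtain ⟨t, ht, hbd⟩ := hev.exists
  -- Step 4: the key cancellation.
  refine cancel_lemma lam c b i₀ hci hbi (by simpa [hc] using S0 x₀) t ht
    (fun j hj => hbd j (Finset.mem_erase.mpr ⟨hj, Finset.mem_univ _⟩)) ?_ ?_
  · have h1 := S0 (fun k => x₀ k + t * w i₀ k)
    have e1 : ∀ j', ∑ k, w j' k * (x₀ k + t * w i₀ k) = c j' + t * b j' := by
      intro j'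
      rw [dot_add_smul]
    simpa only [e1] using h1
  · have h2 := S0 (fun k => x₀ k - t * w i₀ k)
    have e2 : ∀ j', ∑ k, w j' k * (x₀ k - t * w i₀ k) = c j' - t * b j' := by
      intro j'
      rw [dot_sub_smul]
    simpa only [e2] using h2
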